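/- arXiv:2005.11026 — 3 statements merged into one kernel-verified Lean document; each statement's English description precedes it below -/
import Mathlib

section
/- Let s_1,…,s_k be supply vectors on a capacitated undirected graph G=(V,E,c) such that each s_i has a dominant entry, i.e., its master source w_i ∈ argmax_{v∈V} |s_i(v)| satisfies |s_i(w_i)| ≥ Σ_{v≠w_i} |s_i(v)|. Then λ(G; s_1∘w_1,…,s_k∘w_k) = λ(G; s_1,…,s_k); that is, choosing master sources as targets exactly solves the target location problem. In particular this holds whenever every supply vector has at most two sources. -/
open Finset

/-- A flow `f` on an (arbitrarily oriented) undirected graph satisfies the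
demand vector `d` if at every vertex the net inflow equals the demand. -/
def satisfiesFlow {V E : Type*} [Fintype E] [DecidableEq V]
    (hd tl : E → V) (f : E → ℝ) (d : V → ℝ) : Prop :=
  ∀ v : V, d v = (∑ e : E, if hd e = v then f e else 0)
      - (∑ e : E, if tl e = v then f e else 0)

/-- `assign s v` is the demand vector `s ∘ v` obtained from the supply vector `s`
by making `v` the target: it agrees with `s` off `v` and has value
`-∑_{u ≠ v} s u` at `v`. -/
def assign {V : Type*} [Fintype V] [DecidableEq V] (s : V → ℝ) (v : V) : V → ℝ :=
  fun u => if u = v then -(∑ w ∈ univ.erase v, s w) else s u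

/-- The optimum of the maximum concurrent multi-commodity flow problem for
demand vectors `d i` on the capacitated graph given by `hd`, `tl`, `c`:
the largest `l ≥ 0` such that some valid multi-commodity flow satisfies `l • d i`
for all `i`. -/
noncomputable def lamD {V E ι : Type*} [Fintype V] [Fintype E] [Fintype ι] [DecidableEq V]
    (hd tl : E → V) (c : E → ℝ) (d : ι → V → ℝ) : ℝ :=
  sSup {l : ℝ | 0 ≤ l ∧ ∃ f : ι → E → ℝ,
    (∀ e, ∑ i, |f i e| ≤ c e) ∧
    ∀ i, satisfiesFlow hd tl (f i) (fun v => l * d i v)}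

/-- The optimum of the target location problem LoMuF for supply vectors `s i`:
the best value of `lamD` over all choices of targets. -/
noncomputable def lamS {V E ι : Type*} [Fintype V] [Fintype E] [Fintype ι] [DecidableEq V]
    (hd tl : E → V) (c : E → ℝ) (s : ι → V → ℝ) : ℝ :=
  sSup {l : ℝ | 0 ≤ l ∧ ∃ (v : ι → V) (f : ι → E → ℝ),
    (∀ e, ∑ i, |f i e| ≤ c e) ∧
    ∀ i, satisfiesFlow hd tl (f i) (fun u => l * assign (s i) (v i) u)}

section FlowAux

open Finset

variable {V E : Type*} [Fintype E] [DecidableEq V] (hd tl : E → V)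

lemma satisfiesFlow_congr {f : E → ℝ} {d d' : V → ℝ} (h : d = d')
    (hf : satisfiesFlow hd tl f d) : satisfiesFlow hd tl f d' := h ▸ hf

lemma satisfiesFlow_zero : satisfiesFlow hd tl (fun _ => (0:ℝ)) (fun _ => (0:ℝ)) := by
  intro u; simp

lemma satisfiesFlow_add {f g : E → ℝ} {d q : V → ℝ}
    (hf : satisfiesFlow hd tl f d) (hg : satisfiesFlow hd tl g q) :
    satisfiesFlow hd tl (fun e => f e + g e) (fun u => d u + q u) := by
  intro u
  have h1 : ∀ gg : E → V, (∑ e : E, if gg e = u then f e + g e else 0)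
      = (∑ e : E, if gg e = u then f e else 0) + (∑ e : E, if gg e = u then g e else 0) := by
    intro gg
    rw [← Finset.sum_add_distrib]
    exact Finset.sum_congr rfl fun e _ => by split <;> simp
  show d u + q u = _
  rw [h1, h1, hf u, hg u]; ring

lemma satisfiesFlow_smul (c : ℝ) {f : E → ℝ} {d : V → ℝ}
    (hf : satisfiesFlow hd tl f d) :
    satisfiesFlow hd tl (fun e => c * f e) (fun u => c * d u) := by
  intro u
  have h1 : ∀ gg : E → V, (∑ e : E, if gg e = u then c * f e else 0)
      = c * (∑ e : E, if gg e = u then f e else 0) := by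
    intro gg
    rw [Finset.mul_sum]
    exact Finset.sum_congr rfl fun e _ => by split <;> simp
  show c * d u = _
  rw [h1, h1, hf u]; ring

lemma satisfiesFlow_sub_smul (c : ℝ) {f g : E → ℝ} {d q : V → ℝ}
    (hf : satisfiesFlow hd tl f d) (hg : satisfiesFlow hd tl g q) :
    satisfiesFlow hd tl (fun e => f e - c * g e) (fun u => d u - c * q u) := by
  intro u
  have h1 : ∀ gg : E → V, (∑ e : E, if gg e = u then f e - c * g e else 0)
      = (∑ e : E, if gg e = u then f e else 0) - c * (∑ e : E, if gg e = u then g e else 0) := by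
    intro gg
    rw [Finset.mul_sum, ← Finset.sum_sub_distrib]
    exact Finset.sum_congr rfl fun e _ => by split <;> simp
  show d u - c * q u = _
  rw [h1, h1, hf u, hg u]; ring

lemma satisfiesFlow_single [DecidableEq E] (e : E) (x : ℝ) :
    satisfiesFlow hd tl (fun e' => if e' = e then x else 0)
      (fun u => (if u = hd e then x else 0) - (if u = tl e then x else 0)) := by
  intro u
  have h1 : ∀ gg : E → V, (∑ e' : E, if gg e' = u then (if e' = e then x else 0) else 0)
      = if u = gg e then x else 0 := by
    intro gg
    rw [Finset.sum_congr rfl (g := fun e' => if e' = e then (if u = gg e then x else 0) else 0)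
      (fun e' _ => by
        by_cases h : e' = e
        · subst h; simp [eq_comm]
        · simp [h])]
    rw [Finset.sum_ite_eq' Finset.univ e fun _ => if u = gg e then x else 0]
    simp
  rw [h1, h1]

/-- `arc f e a b`: edge `e` carries positive flow (w.r.t. `f`) from `a` to `b`. -/
def arc (f : E → ℝ) (e : E) (a b : V) : Prop :=
  (0 < f e ∧ tl e = a ∧ hd e = b) ∨ (f e < 0 ∧ hd e = a ∧ tl e = b)

/-- `walkP f a L b`: `L` is a walk from `a` to `b` all of whose steps are arcs of `f`. -/
def walkP (f : E → ℝ) : V → List E → V → Prop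
  | a, [], b => a = b
  | a, e :: L, b => ∃ u, arc hd tl f e a u ∧ walkP f u L b

lemma arc_snd {f : E → ℝ} {e : E} {a b a' b' : V}
    (h : arc hd tl f e a b) (h' : arc hd tl f e a' b') : b = b' := by
  rcases h with ⟨h1, _, h2⟩ | ⟨h1, _, h2⟩
  · rcases h' with ⟨h1', _, h2'⟩ | ⟨h1', _, h2'⟩
    · exact h2.symm.trans h2'
    · linarith
  · rcases h' with ⟨h1', _, h2'⟩ | ⟨h1', _, h2'⟩
    · linarith
    · exact h2.symm.trans h2'

lemma arc_extend {f : E → ℝ} {e : E} {a b : V} (h : arc hd tl f e a b) : f e ≠ 0 := by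
  rcases h with ⟨h1, _, _⟩ | ⟨h1, _, _⟩
  · exact ne_of_gt h1
  · exact ne_of_lt h1

lemma walk_append {f : E → ℝ} : ∀ (L₁ L₂ : List E) (a b : V),
    walkP hd tl f a (L₁ ++ L₂) b ↔ ∃ m, walkP hd tl f a L₁ m ∧ walkP hd tl f m L₂ b := by
  intro L₁
  induction L₁ with
  | nil =>
    intro L₂ a b
    constructor
    · intro h; exact ⟨a, rfl, h⟩
    · rintro ⟨m, hm, h⟩; cases hm; exact h
  | cons e L ih =>
    intro L₂ a b
    constructor
    · rintro ⟨u, harc, hw⟩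
      obtain ⟨m, h1, h2⟩ := (ih L₂ u b).mp hw
      exact ⟨m, ⟨u, harc, h1⟩, h2⟩
    · rintro ⟨m, ⟨u, harc, h1⟩, h2⟩
      exact ⟨u, harc, (ih L₂ u b).mpr ⟨m, h1, h2⟩⟩

lemma walk_mem_ne {f : E → ℝ} : ∀ (L : List E) (a b : V), walkP hd tl f a L b →
    ∀ e ∈ L, f e ≠ 0 := by
  intro L
  induction L with
  | nil => intro a b _ e he; simp at he
  | cons e' L ih =>
    rintro a b ⟨u, harc, hw⟩ e he
    rcases List.mem_cons.mp he with rfl | he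
    · exact arc_extend hd tl harc
    · exact ih u b hw e he

lemma walk_nodup {f : E → ℝ} : ∀ (n : ℕ) (L : List E) (a b : V), L.length ≤ n →
    walkP hd tl f a L b → ∃ L', L'.Nodup ∧ L'.length ≤ L.length ∧ walkP hd tl f a L' b := by
  intro n
  induction n with
  | zero =>
    intro L a b hlen hw
    have hL : L = [] := List.length_eq_zero_iff.mp (Nat.le_zero.mp hlen)
    subst hL
    exact ⟨[], List.nodup_nil, le_rfl, hw⟩
  | succ n ih =>
    intro L a b hlen hw
    match L, hw with
    | [], hw => exact ⟨[], List.nodup_nil, le_rfl, hw⟩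
    | e :: L, ⟨u, harc, hw'⟩ =>
      obtain ⟨L', hnd', hlen', hw''⟩ := ih L u b (by simpa using hlen) hw'
      by_cases hmem : e ∈ L'
      · obtain ⟨L₁, L₂, rfl⟩ := List.append_of_mem hmem
        obtain ⟨m, hm1, hm2⟩ := (walk_append hd tl L₁ (e :: L₂) u b).mp hw''
        obtain ⟨u', harc', hw₃⟩ := hm2
        have huu : u = u' := arc_snd hd tl harc harc'
        have hwalk : walkP hd tl f a (e :: L₂) b := ⟨u, harc, huu ▸ hw₃⟩
        have hlen₂ : (e :: L₂).length ≤ n := by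
          have h1 : L₂.length + 1 ≤ (L₁ ++ e :: L₂).length := by
            simp [List.length_append]
          have h2 : L.length ≤ n := by simpa using hlen
          simp only [List.length_cons]
          omega
        obtain ⟨L'', hnd'', hlen'', hw₄⟩ := ih (e :: L₂) a b hlen₂ hwalk
        refine ⟨L'', hnd'', ?_, hw₄⟩
        have : (e :: L₂).length ≤ (L₁ ++ e :: L₂).length := by
          simp [List.length_append]
        simp only [List.length_cons] at *
        omega
      · refine ⟨e :: L', List.nodup_cons.mpr ⟨hmem, hnd'⟩, by simpa using hlen', ⟨u, harc, hw''⟩⟩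

lemma mySign_mul_self (x : ℝ) : Real.sign x * x = |x| := by
  rcases lt_trichotomy x 0 with h|h|h
  · simp [Real.sign_of_neg h, abs_of_neg h]
  · simp [h]
  · simp [Real.sign_of_pos h, abs_of_pos h]

lemma mySign_mul_abs (x : ℝ) : Real.sign x * |x| = x := by
  rcases lt_trichotomy x 0 with h|h|h
  · simp [Real.sign_of_neg h, abs_of_neg h]
  · simp [h]
  · simp [Real.sign_of_pos h, abs_of_pos h]

lemma abs_sign {x : ℝ} (h : x ≠ 0) : |Real.sign x| = 1 := by
  rcases h.lt_or_gt with h|h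
  · simp [Real.sign_of_neg h]
  · simp [Real.sign_of_pos h]

lemma walk_flow [DecidableEq E] {f : E → ℝ} : ∀ (L : List E) (a b : V), L.Nodup →
    walkP hd tl f a L b →
    satisfiesFlow hd tl (fun e => if e ∈ L then Real.sign (f e) else 0)
      (fun u => (if u = b then 1 else 0) - (if u = a then 1 else 0)) := by
  intro L
  induction L with
  | nil =>
    intro a b _ hw
    cases hw
    intro u; simp
  | cons e L ih =>
    rintro a b hnd ⟨u0, harc, hw'⟩
    have hnotmem : e ∉ L := (List.nodup_cons.mp hnd).1
    have hrest := ih u0 b (List.nodup_cons.mp hnd).2 hw'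
    have hsingle := satisfiesFlow_single hd tl e (Real.sign (f e))
    have hadd := satisfiesFlow_add hd tl hsingle hrest
    have hflow : (fun e' => (if e' = e then Real.sign (f e) else 0)
        + (if e' ∈ L then Real.sign (f e') else 0))
        = (fun e' => if e' ∈ e :: L then Real.sign (f e') else 0) := by
      funext e'
      by_cases h1 : e' = e
      · subst h1; simp [hnotmem]
      · by_cases h2 : e' ∈ L <;> simp [h1, h2]
    rw [hflow] at hadd
    apply satisfiesFlow_congr hd tl _ hadd
    funext u
    have key : ∀ (P : Prop) [Decidable P], (if P then (-1:ℝ) else 0) = -(if P then 1 else 0) := by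
      intro P _; split <;> simp
    rcases harc with ⟨hpos, hta, hhu⟩ | ⟨hneg, hha, htu⟩
    · rw [Real.sign_of_pos hpos, hta, hhu]; ring
    · rw [Real.sign_of_neg hneg, hha, htu, key, key]; ring

lemma exists_walk [Fintype V] {f : E → ℝ} {d : V → ℝ} {v w : V}
    (hf : satisfiesFlow hd tl f d) (hneg : ∀ u, u ≠ v → d u ≤ 0) (hdw : d w < 0) :
    ∃ L, walkP hd tl f w L v := by
  by_contra hcon
  push_neg at hcon
  classical
  set S : Finset V := univ.filter (fun u => ∃ L, walkP hd tl f w L u) with hS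
  have hwS : w ∈ S := by
    simp only [hS, mem_filter, mem_univ, true_and]
    exact ⟨[], rfl⟩
  have hvS : v ∉ S := by
    simp only [hS, mem_filter, mem_univ, true_and]
    push_neg
    exact hcon
  have hext : ∀ (e : E) (a b : V), a ∈ S → arc hd tl f e a b → b ∈ S := by
    intro e a b ha harc
    simp only [hS, mem_filter, mem_univ, true_and] at ha ⊢
    obtain ⟨L, hL⟩ := ha
    exact ⟨L ++ [e], (walk_append hd tl L [e] w b).mpr ⟨a, hL, ⟨b, harc, rfl⟩⟩⟩
  have hsum : ∑ u ∈ S, d u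
      = ∑ e : E, ((if hd e ∈ S then f e else 0) - (if tl e ∈ S then f e else 0)) := by
    rw [Finset.sum_congr rfl (fun u _ => hf u), Finset.sum_sub_distrib,
      Finset.sum_sub_distrib, Finset.sum_comm, Finset.sum_comm (s := S)]
    congr 1 <;> exact Finset.sum_congr rfl fun e _ => Finset.sum_ite_eq S _ _
  have hterm : ∀ e : E, (0:ℝ) ≤ (if hd e ∈ S then f e else 0) - (if tl e ∈ S then f e else 0) := by
    intro e
    by_cases h1 : hd e ∈ S <;> by_cases h2 : tl e ∈ S <;> simp [h1, h2]
    · -- hd ∈ S, tl ∉ S : f e ≥ 0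
      by_contra hlt
      push_neg at hlt
      exact h2 (hext e (hd e) (tl e) h1 (Or.inr ⟨hlt, rfl, rfl⟩))
    · -- hd ∉ S, tl ∈ S : f e ≤ 0
      by_contra hlt
      push_neg at hlt
      exact h1 (hext e (tl e) (hd e) h2 (Or.inl ⟨hlt, rfl, rfl⟩))
  have hge : (0:ℝ) ≤ ∑ u ∈ S, d u := hsum ▸ Finset.sum_nonneg fun e _ => hterm e
  have hlt : ∑ u ∈ S, d u < 0 := by
    rw [← Finset.add_sum_erase S d hwS]
    have : ∑ u ∈ S.erase w, d u ≤ 0 := by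
      apply Finset.sum_nonpos
      intro u hu
      exact hneg u (fun h => hvS (h ▸ (Finset.mem_of_mem_erase hu)))
    linarith
  linarith

end FlowAux

section RouteAux

open Finset

lemma step_bound {x y ε : ℝ} (hx : x ≠ 0) (hε : 0 < ε) (hεx : ε ≤ |x|)
    (h1 : 0 ≤ y * (x - ε * Real.sign x)) (h2 : |y| ≤ |x - ε * Real.sign x|) :
    0 ≤ (ε * Real.sign x + y) * x ∧ |ε * Real.sign x + y| ≤ |x| := by
  rcases hx.lt_or_gt with h | h
  · rw [Real.sign_of_neg h] at h1 h2 ⊢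
    rw [abs_of_neg h] at hεx ⊢
    have hz : x - ε * (-1) = x + ε := by ring
    rw [hz] at h1 h2
    have hzle : x + ε ≤ 0 := by linarith
    rw [abs_of_nonpos hzle] at h2
    obtain ⟨hy2, hy1⟩ := abs_le.mp h2
    constructor
    · nlinarith [mul_nonneg hε.le (by linarith : (0:ℝ) ≤ -(x + y))]
    · rw [abs_le]; constructor <;> linarith
  · rw [Real.sign_of_pos h] at h1 h2 ⊢
    rw [abs_of_pos h] at hεx ⊢
    have hz : x - ε * 1 = x - ε := by ring
    rw [hz] at h1 h2
    have hzle : 0 ≤ x - ε := by linarith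
    rw [abs_of_nonneg hzle] at h2
    obtain ⟨hy2, hy1⟩ := abs_le.mp h2
    constructor
    · nlinarith [mul_nonneg hε.le (by linarith : (0:ℝ) ≤ x + y - ε)]
    · rw [abs_le]; constructor <;> linarith

lemma final_bound {x y α : ℝ} (h1 : 0 ≤ y * x) (h2 : |y| ≤ |x|) (hα : 0 ≤ α) (hα1 : α ≤ 1) :
    |x - (1 + α) * y| ≤ |x| := by
  rcases lt_trichotomy x 0 with h | h | h
  · rw [abs_of_neg h] at h2 ⊢
    have hy : y ≤ 0 := by nlinarith
    obtain ⟨hy2, hy1⟩ := abs_le.mp h2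
    have hmul : (1 + α) * (-y) ≤ 2 * (-x) :=
      mul_le_mul (by linarith) (by linarith) (by linarith) (by linarith)
    rw [abs_le]; constructor <;> nlinarith
  · subst h
    have : y = 0 := abs_nonpos_iff.mp (by simpa using h2)
    simp [this]
  · rw [abs_of_pos h] at h2 ⊢
    have hy : 0 ≤ y := by nlinarith
    obtain ⟨hy2, hy1⟩ := abs_le.mp h2
    have hmul : (1 + α) * y ≤ 2 * x :=
      mul_le_mul (by linarith) (by linarith) (by linarith) (by linarith)
    rw [abs_le]; constructor <;> nlinarith

variable {V E : Type*} [Fintype V] [Fintype E] [DecidableEq V] (hd tl : E → V)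

lemma route [DecidableEq E] :
    ∀ (n : ℕ) (f : E → ℝ) (d : V → ℝ) (v w : V) (a : ℝ),
      (univ.filter (fun e => f e ≠ 0)).card ≤ n →
      satisfiesFlow hd tl f d → (∀ u, u ≠ v → d u ≤ 0) → w ≠ v →
      0 ≤ a → a ≤ -d w →
      ∃ p : E → ℝ,
        satisfiesFlow hd tl p (fun u => if u = v then a else if u = w then -a else 0) ∧
        ∀ e, 0 ≤ p e * f e ∧ |p e| ≤ |f e| := by
  intro n
  induction n with
  | zero =>
    intro f d v w a hcard hf hneg hwv ha0 haw
    have hfz : ∀ e, f e = 0 := by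
      intro e
      by_contra hne
      have hmem : e ∈ univ.filter (fun e => f e ≠ 0) := by simp [hne]
      have := Finset.card_pos.mpr ⟨e, hmem⟩
      omega
    have hdz : d w = 0 := by
      rw [hf w]; simp [hfz]
    have ha : a = 0 := le_antisymm (by rw [hdz] at haw; simpa using haw) ha0
    subst ha
    exact ⟨fun _ => 0, fun u => by simp, fun e => by simp⟩
  | succ n ih =>
    intro f d v w a hcard hf hneg hwv ha0 haw
    rcases eq_or_lt_of_le ha0 with ha | ha
    · exact ⟨fun _ => 0, fun u => by simp [← ha], fun e => by simp⟩
    · have hdw : d w < 0 := by linarith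
      obtain ⟨L0, hL0⟩ := exists_walk hd tl hf hneg hdw
      obtain ⟨L, hnd, _, hL⟩ := walk_nodup hd tl L0.length L0 w v le_rfl hL0
      have hLne : L ≠ [] := fun hnil => hwv (by rw [hnil] at hL; exact hL)
      have hLfin : L.toFinset.Nonempty := by
        simpa [List.toFinset_eq_empty_iff] using hLne
      obtain ⟨e0, he0mem, he0min⟩ := L.toFinset.exists_min_image (fun e => |f e|) hLfin
      have he0L : e0 ∈ L := List.mem_toFinset.mp he0mem
      have hfL : ∀ e ∈ L, f e ≠ 0 := walk_mem_ne hd tl L w v hL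
      have hfe0 : f e0 ≠ 0 := hfL e0 he0L
      set ε0 : ℝ := |f e0| with hε0def
      have hε0 : 0 < ε0 := abs_pos.mpr hfe0
      have hminL : ∀ e ∈ L, ε0 ≤ |f e| := fun e he => he0min e (List.mem_toFinset.mpr he)
      have hwflow := walk_flow hd tl L w v hnd hL
      by_cases hcase : a ≤ ε0
      · -- one pass along the walk suffices
        refine ⟨fun e => a * (if e ∈ L then Real.sign (f e) else 0), ?_, ?_⟩
        · apply satisfiesFlow_congr hd tl _ (satisfiesFlow_smul hd tl a hwflow)
          funext u
          by_cases h1 : u = v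
          · simp [h1, Ne.symm hwv]
          · by_cases h2 : u = w <;> simp [h1, h2, hwv]
        · intro e
          by_cases he : e ∈ L
          · simp only [if_pos he]
            constructor
            · rw [mul_assoc, mySign_mul_self (f e)]
              positivity
            · rw [abs_mul, abs_sign (hfL e he), mul_one, abs_of_nonneg ha0]
              exact le_trans hcase (hminL e he)
          · simp [he]
      · push_neg at hcase
        set P : E → ℝ := fun e => if e ∈ L then Real.sign (f e) else 0 with hP
        set f' : E → ℝ := fun e => f e - ε0 * P e with hf'def
        set d' : V → ℝ :=
          fun u => d u - ε0 * ((if u = v then 1 else 0) - (if u = w then 1 else 0)) with hd'def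
        have hf'2 : satisfiesFlow hd tl f' d' := satisfiesFlow_sub_smul hd tl ε0 hf hwflow
        have hfzP : ∀ e, f e = 0 → f' e = 0 := by
          intro e hfe
          show f e - ε0 * P e = 0
          rw [hP]
          simp [hfe, Real.sign_zero]
        have hf'e0 : f' e0 = 0 := by
          show f e0 - ε0 * P e0 = 0
          rw [hP]
          simp only [if_pos he0L]
          rw [hε0def, mul_comm, mySign_mul_abs]
          ring
        have hsupp : univ.filter (fun e => f' e ≠ 0) ⊆ (univ.filter (fun e => f e ≠ 0)).erase e0 := by
          intro e he
          simp only [mem_filter, mem_univ, true_and] at he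
          rw [mem_erase, mem_filter]
          refine ⟨?_, mem_univ e, ?_⟩
          · rintro rfl; exact he hf'e0
          · intro hfe; exact he (hfzP e hfe)
        have hcard' : (univ.filter (fun e => f' e ≠ 0)).card ≤ n := by
          have h1 := Finset.card_le_card hsupp
          have he0f : e0 ∈ univ.filter (fun e => f e ≠ 0) := by simp [hfe0]
          rw [Finset.card_erase_of_mem he0f] at h1
          omega
        have hneg' : ∀ u, u ≠ v → d' u ≤ 0 := by
          intro u hu
          show d u - ε0 * ((if u = v then 1 else 0) - (if u = w then 1 else 0)) ≤ 0
          by_cases h2 : u = w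
          · subst h2
            rw [if_neg hu, if_pos rfl]
            have : d u ≤ -a := by linarith
            linarith
          · rw [if_neg hu, if_neg h2]
            have := hneg u hu
            linarith
        have hd'w : d' w = d w + ε0 := by
          show d w - ε0 * ((if w = v then 1 else 0) - (if w = w then 1 else 0)) = d w + ε0
          rw [if_neg hwv, if_pos rfl]
          ring
        obtain ⟨p', hp'sat, hp'b⟩ := ih f' d' v w (a - ε0) hcard' hf'2 hneg' hwv
          (by linarith) (by rw [hd'w]; linarith)
        refine ⟨fun e => ε0 * P e + p' e, ?_, ?_⟩
        · apply satisfiesFlow_congr hd tl _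
            (satisfiesFlow_add hd tl (satisfiesFlow_smul hd tl ε0 hwflow) hp'sat)
          funext u
          by_cases h1 : u = v
          · subst h1
            simp [Ne.symm hwv] <;> ring
          · by_cases h2 : u = w
            · subst h2
              simp [h1, hwv] <;> ring
            · simp [h1, h2] <;> ring
        · intro e
          obtain ⟨hb1, hb2⟩ := hp'b e
          show 0 ≤ (ε0 * P e + p' e) * f e ∧ |ε0 * P e + p' e| ≤ |f e|
          by_cases he : e ∈ L
          · have hPe : P e = Real.sign (f e) := by rw [hP]; simp [he]
            have hf'e : f' e = f e - ε0 * Real.sign (f e) := by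
              show f e - ε0 * P e = _
              rw [hPe]
            rw [hf'e] at hb1 hb2
            rw [hPe]
            exact step_bound (hfL e he) hε0 (hminL e he) hb1 hb2
          · have hPe : P e = 0 := by rw [hP]; simp [he]
            have hf'e : f' e = f e := by
              show f e - ε0 * P e = f e
              rw [hPe]; ring
            rw [hf'e] at hb1 hb2
            rw [hPe]
            simpa using ⟨hb1, hb2⟩

end RouteAux

section Commodity

open Finset

lemma commodity {V E : Type*} [Fintype V] [Fintype E] [DecidableEq V]
    (hd tl : E → V) {σ : V → ℝ} (hσ : ∀ u, σ u ≤ 0) {B : V}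
    (hdomB : ∑ u ∈ univ.erase B, |σ u| ≤ |σ B|)
    {l : ℝ} (hl : 0 ≤ l) {A : V} {f : E → ℝ}
    (hf : satisfiesFlow hd tl f (fun u => l * assign σ A u)) :
    ∃ g : E → ℝ, satisfiesFlow hd tl g (fun u => l * assign σ B u) ∧ ∀ e, |g e| ≤ |f e| := by
  classical
  have habs : ∀ u, |σ u| = -σ u := fun u => abs_of_nonpos (hσ u)
  by_cases hAB : A = B
  · exact ⟨f, hAB ▸ hf, fun e => le_refl _⟩
  by_cases hzero : l * σ B = 0
  · refine ⟨f, ?_, fun e => le_refl _⟩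
    have heq : (fun u => l * assign σ A u) = (fun u => l * assign σ B u) := by
      rcases mul_eq_zero.mp hzero with hl0 | hB0
      · funext u; rw [hl0]; ring
      · have hσ0 : ∀ u, σ u = 0 := by
          intro u
          by_cases hu : u = B
          · rw [hu]; exact hB0
          · have h1 : |σ u| ≤ |σ B| := by
              calc |σ u| ≤ ∑ x ∈ univ.erase B, |σ x| :=
                    Finset.single_le_sum (f := fun x => |σ x|) (fun x _ => abs_nonneg _)
                      (Finset.mem_erase.mpr ⟨hu, mem_univ u⟩)
                _ ≤ |σ B| := hdomB
            rw [hB0] at h1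
            simpa using abs_nonpos_iff.mp (by simpa using h1)
        funext u
        simp [assign, hσ0]
    exact heq ▸ hf
  · have hlpos : 0 < l := lt_of_le_of_ne hl (fun h => hzero (by rw [← h]; ring))
    have hσB : σ B < 0 := by
      rcases lt_or_eq_of_le (hσ B) with h | h
      · exact h
      · exact absurd (by rw [h]; ring) hzero
    set a : ℝ := l * (-σ B) with hadef
    have hapos : 0 < a := mul_pos hlpos (by linarith)
    have hBA : B ≠ A := Ne.symm hAB
    set d : V → ℝ := fun u => l * assign σ A u with hddef
    have hneg : ∀ u, u ≠ A → d u ≤ 0 := by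
      intro u hu
      show l * assign σ A u ≤ 0
      rw [assign, if_neg hu]
      exact mul_nonpos_of_nonneg_of_nonpos hl (hσ u)
    have hdB : d B = l * σ B := by
      show l * assign σ A B = l * σ B
      rw [assign, if_neg hBA]
    obtain ⟨p, hpsat, hpb⟩ := route hd tl
      (univ.filter (fun e => f e ≠ 0)).card f d A B a le_rfl hf hneg hBA hapos.le
      (by rw [hdB, hadef]; ring_nf; exact le_rfl)
    set α : ℝ := (∑ u ∈ univ.erase B, |σ u|) / (-σ B) with hαdef
    have hα0 : 0 ≤ α :=
      div_nonneg (Finset.sum_nonneg fun u _ => abs_nonneg _) (by linarith)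
    have hα1 : α ≤ 1 := by
      rw [hαdef, div_le_one (by linarith : (0:ℝ) < -σ B)]
      calc ∑ u ∈ univ.erase B, |σ u| ≤ |σ B| := hdomB
        _ = -σ B := habs B
    have hαval : α * (-σ B) = ∑ u ∈ univ.erase B, |σ u| :=
      div_mul_cancel₀ _ (by linarith : (-σ B) ≠ 0)
    have hsumB : ∑ u ∈ univ.erase B, |σ u| = -∑ u ∈ univ.erase B, σ u := by
      rw [← Finset.sum_neg_distrib]
      exact Finset.sum_congr rfl fun u _ => habs u
    have hsumA : σ A + ∑ u ∈ univ.erase A, σ u = ∑ u : V, σ u :=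
      Finset.add_sum_erase univ σ (mem_univ A)
    have hsumB' : σ B + ∑ u ∈ univ.erase B, σ u = ∑ u : V, σ u :=
      Finset.add_sum_erase univ σ (mem_univ B)
    refine ⟨fun e => f e - (1 + α) * p e, ?_, ?_⟩
    · apply satisfiesFlow_congr hd tl _ (satisfiesFlow_sub_smul hd tl (1 + α) hf hpsat)
      funext u
      by_cases h1 : u = B
      · show l * assign σ A u - (1 + α) * (if u = A then a else if u = B then -a else 0)
            = l * assign σ B u
        simp only [assign, h1, if_neg hBA, eq_self_iff_true, if_true]
        linear_combination (1 + α) * hadef + l * hαval + l * hsumB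
      · by_cases h2 : u = A
        · show l * assign σ A u - (1 + α) * (if u = A then a else if u = B then -a else 0)
              = l * assign σ B u
          simp only [assign, h2, if_neg hAB, eq_self_iff_true, if_true]
          linear_combination (-(1 + α)) * hadef + (-l) * hsumA + l * hsumB'
            + (-l) * hαval + (-l) * hsumB
        · show l * assign σ A u - (1 + α) * (if u = A then a else if u = B then -a else 0)
              = l * assign σ B u
          simp only [assign, if_neg h2, if_neg h1]
          ring
    · intro e
      obtain ⟨hb1, hb2⟩ := hpb e
      exact final_bound hb1 hb2 hα0 hα1

end Commodity

/-- Corollary: when every supply vector has a dominant entry (its master source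
`w i` satisfies `|s i (w i)| ≥ ∑_{v ≠ w i} |s i v|`), choosing the master sources
as targets exactly solves LoMuF. -/
theorem dominant_entry_exact {V E ι : Type*} [Fintype V] [Fintype E] [Fintype ι]
    [DecidableEq V]
    (hd tl : E → V) (c : E → ℝ) (hc : ∀ e, 0 ≤ c e)
    (s : ι → V → ℝ) (hs : ∀ i v, s i v ≤ 0)
    (w : ι → V) (hw : ∀ i v, |s i v| ≤ |s i (w i)|)
    (hdom : ∀ i, ∑ v ∈ univ.erase (w i), |s i v| ≤ |s i (w i)|) :
    lamD hd tl c (fun i => assign (s i) (w i)) = lamS hd tl c s := by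
  classical
  unfold lamD lamS
  congr 1
  ext l
  simp only [Set.mem_setOf_eq]
  constructor
  · rintro ⟨hl, f, hcap, hsat⟩
    exact ⟨hl, w, f, hcap, hsat⟩
  · rintro ⟨hl, v, f, hcap, hsat⟩
    refine ⟨hl, ?_⟩
    have key : ∀ i, ∃ g : E → ℝ,
        satisfiesFlow hd tl g (fun u => l * assign (s i) (w i) u) ∧ ∀ e, |g e| ≤ |f i e| :=
      fun i => commodity hd tl (hs i) (hdom i) hl (hsat i)
    choose g hg hgb using key
    exact ⟨g, fun e => le_trans (Finset.sum_le_sum fun i _ => hgb i e) (hcap e), hg⟩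
end

section
/- Let S = {s_1,…,s_{3m}} be a multiset of positive integers and B = (Σ_i s_i)/m. Let G be the capacitated star with center r and leaves u_1,…,u_m, where every edge has capacity B. For 1≤i≤3m define the uni-source supply vector d_i with value −s_i at r and 0 elsewhere. Restrict the targets to the candidate set U = {u_1,…,u_m} of leaves, and let λ_U(G; ·) denote the maximum over targets chosen from U of the concurrent flow value. Then λ_U(G; d_1,…,d_{3m}) ≥ 1 if and only if S has an equi-partition, i.e., a partition S_1,…,S_m of S with Σ_{s∈S_j} s = B for every j. -/
open Finset

/-- The optimum of the target location problem with restricted targets: targets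
must be chosen from the candidate set given as the range of `emb : T → V`. -/
noncomputable def lamRes {V E ι T : Type*} [Fintype V] [Fintype E] [Fintype ι]
    [DecidableEq V]
    (hd tl : E → V) (c : E → ℝ) (emb : T → V) (s : ι → V → ℝ) : ℝ :=
  sSup {l : ℝ | 0 ≤ l ∧ ∃ (v : ι → T) (f : ι → E → ℝ),
    (∀ e, ∑ i, |f i e| ≤ c e) ∧
    ∀ i, satisfiesFlow hd tl (f i) (fun u => l * assign (s i) (emb (v i)) u)}

/-- Theorem (restricted targets on stars with uni-source supply vectors): consider
the star with center `r = none` and `m` leaves (every edge of capacity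
`B = (∑ s)/m`, oriented towards the center), and the `3m` uni-source supply vectors
`d_i` with value `-s_i` at the center. With targets restricted to the leaves, the
optimum of the target location problem is at least `1` iff the multiset
`s_0, …, s_{3m-1}` of positive integers admits an equi-partition into `m` parts of
equal sum `B`. -/
theorem star_restricted_partition (m : ℕ) (hm : 0 < m) (s : Fin (3 * m) → ℕ)
    (hs : ∀ i, 0 < s i) :
    1 ≤ lamRes (fun _ : Fin m => (none : Option (Fin m)))
          (fun j : Fin m => (some j : Option (Fin m)))
          (fun _ : Fin m => (∑ i, (s i : ℝ)) / m)
          (fun j : Fin m => (some j : Option (Fin m)))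
          (fun (i : Fin (3 * m)) (v : Option (Fin m)) =>
            if v = none then -(s i : ℝ) else 0)
      ↔ ∃ p : Fin (3 * m) → Fin m,
          ∀ j, ∑ i ∈ univ.filter (fun i => p i = j), (s i : ℝ)
            = (∑ i, (s i : ℝ)) / m := by

  have hm' : (0:ℝ) < m := by exact_mod_cast hm
  have hNpos : (0:ℝ) < ∑ i, (s i : ℝ) := by
    apply Finset.sum_pos
    · intro i _; exact_mod_cast hs i
    · exact ⟨⟨0, by omega⟩, mem_univ _⟩
  set N : ℝ := ∑ i, (s i : ℝ) with hNdef
  set B : ℝ := N / m with hBdef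
  set S : Set ℝ := {l : ℝ | 0 ≤ l ∧ ∃ (v : Fin (3*m) → Fin m) (f : Fin (3*m) → Fin m → ℝ),
    (∀ e, ∑ i, |f i e| ≤ B) ∧
    ∀ i, satisfiesFlow (fun _ : Fin m => (none : Option (Fin m))) (fun j => some j) (f i)
      (fun u => l * assign (fun v' => if v' = none then -(s i:ℝ) else 0) (some (v i)) u)}
    with hSdef
  have hlam : lamRes (fun _ : Fin m => (none : Option (Fin m)))
          (fun j : Fin m => (some j : Option (Fin m)))
          (fun _ : Fin m => B)
          (fun j : Fin m => (some j : Option (Fin m)))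
          (fun (i : Fin (3 * m)) (v : Option (Fin m)) =>
            if v = none then -(s i : ℝ) else 0) = sSup S := rfl
  rw [hlam]
  -- flows are determined by the targets
  have flow_eq : ∀ (l : ℝ) (v : Fin (3*m) → Fin m) (f : Fin (3*m) → Fin m → ℝ),
      (∀ i, satisfiesFlow (fun _ : Fin m => (none : Option (Fin m))) (fun j => some j) (f i)
        (fun u => l * assign (fun v' => if v' = none then -(s i:ℝ) else 0) (some (v i)) u)) →
      ∀ i j, f i j = if v i = j then -(l * s i) else 0 := by
    intro l v f hf i j
    have h := hf i (some j)
    simp only [assign, reduceCtorEq, if_false, Option.some.injEq,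
      Finset.sum_ite_eq' , Finset.sum_const_zero, Finset.mem_univ, if_true] at h
    simp only [Finset.mem_erase, ne_eq, reduceCtorEq, not_false_iff, Finset.mem_univ,
      and_self, if_true, neg_neg, zero_sub] at h
    by_cases hj : j = v i
    · subst hj
      rw [if_pos rfl] at h
      rw [if_pos rfl]
      linarith
    · rw [if_neg hj] at h
      rw [if_neg (fun hh => hj hh.symm)]
      linarith
  -- the per-edge load
  have load_le : ∀ l ∈ S, ∀ (v : Fin (3*m) → Fin m),
      (∃ f : Fin (3*m) → Fin m → ℝ, (∀ e, ∑ i, |f i e| ≤ B) ∧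
        ∀ i, satisfiesFlow (fun _ : Fin m => (none : Option (Fin m))) (fun j => some j) (f i)
          (fun u => l * assign (fun v' => if v' = none then -(s i:ℝ) else 0) (some (v i)) u)) →
      ∀ j, l * ∑ i ∈ univ.filter (fun i => v i = j), (s i : ℝ) ≤ B := by
    intro l hl v ⟨f, hc, hf⟩ j
    have hl0 : 0 ≤ l := hl.1
    have hfe := flow_eq l v f hf
    have : ∑ i, |f i j| = l * ∑ i ∈ univ.filter (fun i => v i = j), (s i : ℝ) := by
      rw [Finset.mul_sum, Finset.sum_filter]
      apply Finset.sum_congr rfl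
      intro i _
      rw [hfe i j]
      split_ifs with h
      · rw [abs_neg, abs_of_nonneg (by positivity)]
      · simp
    rw [← this]; exact hc j
  have hS_le_one : ∀ l ∈ S, l ≤ 1 := by
    intro l hl
    obtain ⟨hl0, v, f, hc, hf⟩ := hl
    have key : ∀ j, l * ∑ i ∈ univ.filter (fun i => v i = j), (s i : ℝ) ≤ B :=
      load_le l ⟨hl0, v, f, hc, hf⟩ v ⟨f, hc, hf⟩
    have hsum : ∑ j : Fin m, l * ∑ i ∈ univ.filter (fun i => v i = j), (s i : ℝ)
        ≤ ∑ _j : Fin m, B := Finset.sum_le_sum (fun j _ => key j)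
    rw [← Finset.mul_sum, Finset.sum_fiberwise, Finset.sum_const, card_univ,
      Fintype.card_fin, nsmul_eq_mul] at hsum
    have hmb : (m : ℝ) * B = N := by
      rw [hBdef]; field_simp
    rw [hmb] at hsum
    nlinarith
  have hzero : (0:ℝ) ∈ S := by
    refine ⟨le_refl 0, fun _ => ⟨0, by omega⟩, fun _ _ => 0, fun e => ?_, fun i u => by simp⟩
    simp only [abs_zero, Finset.sum_const_zero]
    positivity
  constructor
  · intro h
    -- extract a partition with all parts at most B
    have hgood : ∃ v : Fin (3*m) → Fin m,
        ∀ j, ∑ i ∈ univ.filter (fun i => v i = j), (s i:ℝ) ≤ B := by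
      by_contra hno
      push_neg at hno
      have hub : ∀ l ∈ S, l ≤ N / (N + 1) := by
        intro l hl
        obtain ⟨hl0, v, f, hc, hf⟩ := hl
        obtain ⟨j, hj⟩ := hno v
        have hcap : l * ∑ i ∈ univ.filter (fun i => v i = j), (s i : ℝ) ≤ B :=
          load_le l ⟨hl0, v, f, hc, hf⟩ v ⟨f, hc, hf⟩ j
        -- integrality
        set T : ℕ := ∑ i ∈ univ.filter (fun i => v i = j), s i with hT
        have hTc : ∑ i ∈ univ.filter (fun i => v i = j), (s i : ℝ) = (T : ℝ) := by
          rw [hT]; push_cast; ring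
        set Nn : ℕ := ∑ i, s i with hNn
        have hNc : N = (Nn : ℝ) := by rw [hNdef, hNn]; push_cast; ring
        have hint : (Nn : ℝ) + 1 ≤ (m : ℝ) * T := by
          have h1 : (Nn : ℝ) < (m:ℝ) * T := by
            have := hj
            rw [hTc, hBdef, hNc] at this
            rw [div_lt_iff₀ hm'] at this
            linarith
          have h2 : Nn < m * T := by exact_mod_cast h1
          have h3 : Nn + 1 ≤ m * T := h2
          exact_mod_cast h3
        have hlt : l * ((Nn:ℝ) + 1) ≤ (Nn : ℝ) := by
          have h4 : l * ((Nn:ℝ) + 1) ≤ l * ((m:ℝ) * T) :=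
            mul_le_mul_of_nonneg_left hint hl0
          have h5 : (m:ℝ) * (l * (T:ℝ)) ≤ (m:ℝ) * B := by
            apply mul_le_mul_of_nonneg_left _ (le_of_lt hm')
            rw [← hTc]; exact hcap
          have hmb : (m : ℝ) * B = N := by rw [hBdef]; field_simp
          rw [hmb, hNc] at h5
          nlinarith
        rw [hNc, le_div_iff₀ (by positivity)]
        linarith
      have hsup : sSup S ≤ N / (N + 1) := csSup_le ⟨0, hzero⟩ hub
      have : N / (N + 1) < 1 := by
        rw [div_lt_one (by positivity)]; linarith
      linarith
    obtain ⟨v, hv⟩ := hgood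
    refine ⟨v, fun j => ?_⟩
    have htot : ∑ j : Fin m, ∑ i ∈ univ.filter (fun i => v i = j), (s i:ℝ) = N :=
      Finset.sum_fiberwise univ v (fun i => (s i : ℝ))
    have hBtot : ∑ _j : Fin m, B = N := by
      rw [Finset.sum_const, card_univ, Fintype.card_fin, nsmul_eq_mul, hBdef]
      field_simp
    have := (Finset.sum_eq_sum_iff_of_le (fun j _ => hv j)).mp (by rw [htot, hBtot])
    exact this j (mem_univ j)
  · rintro ⟨p, hp⟩
    have hone : (1:ℝ) ∈ S := by
      refine ⟨zero_le_one, p, fun i j => if p i = j then -(s i:ℝ) else 0, fun j => ?_, fun i u => ?_⟩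
      · have : ∑ i, |if p i = j then -(s i:ℝ) else 0|
            = ∑ i ∈ univ.filter (fun i => p i = j), (s i:ℝ) := by
          rw [Finset.sum_filter]
          apply Finset.sum_congr rfl
          intro i _
          split_ifs with h
          · rw [abs_neg, abs_of_nonneg (by positivity)]
          · simp
        rw [this, hp j]
      · match u with
        | none =>
          simp only [assign, reduceCtorEq, if_false, if_true, one_mul,
            Finset.sum_ite_eq', Finset.mem_univ, if_true, Finset.sum_const_zero, sub_zero]
          have : ∑ e : Fin m, (if p i = e then -(s i:ℝ) else 0) = -(s i:ℝ) := by
            rw [Finset.sum_ite_eq]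
            simp
          rw [this]
        | some j =>
          simp only [assign, reduceCtorEq, if_false, Option.some.injEq, one_mul,
            Finset.sum_const_zero, zero_sub]
          rw [Finset.sum_ite_eq' univ j (fun x => if p i = x then -(s i:ℝ) else 0)]
          simp only [Finset.mem_univ, if_true]
          rw [show (∑ x ∈ (univ : Finset (Option (Fin m))).erase (some (p i)),
              if x = none then -(s i:ℝ) else 0) = -(s i:ℝ) from by
            rw [Finset.sum_ite_eq']; simp]
          by_cases h : j = p i
          · simp [h]
          · simp [h, Ne.symm h]
    exact le_csSup ⟨1, hS_le_one⟩ hone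
end

section
/- Let G=(V,E) be an undirected graph with V={v_1,…,v_k}. Build the capacitated undirected graph G' with vertex set V ∪ E ∪ {w_e : e∈E}, edges ⟨v,e⟩ for each vertex v incident to edge e in G and ⟨e,w_e⟩ for each e∈E, all of capacity 1. For 1≤i≤k define the supply vector d_i on G' with value −1 at v_i and at w_e for every edge e of G incident to v_i, and 0 elsewhere. Then for any index set I ⊆ {1,…,k}: there exist targets (u_i)_{i∈I} in G' and a valid multi-commodity flow satisfying the demand vectors (d_i∘u_i)_{i∈I} if and only if {v_i : i∈I} is an independent set of G. -/
open Finset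

section MIS

variable {V : Type*} [Fintype V] [DecidableEq V] (G : SimpleGraph V) [DecidableRel G.Adj]

/-- Head map of the graph `G'` built from `G` for the reduction from maximum
independent set: vertices are `V ⊕ E ⊕ {w_e : e ∈ E}`; edges of the first kind join
a vertex `v` of `G` (the tail) to each edge `e` of `G` incident to it (the head);
edges of the second kind join `e` (the tail) to `w_e` (the head). -/
def misHd :
    ({p : V × G.edgeFinset // p.1 ∈ (p.2.1 : Sym2 V)} ⊕ G.edgeFinset)
      → V ⊕ (G.edgeFinset ⊕ G.edgeFinset)
  | Sum.inl p => Sum.inr (Sum.inl p.1.2)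
  | Sum.inr e => Sum.inr (Sum.inr e)

/-- Tail map of the graph `G'` built from `G`. -/
def misTl :
    ({p : V × G.edgeFinset // p.1 ∈ (p.2.1 : Sym2 V)} ⊕ G.edgeFinset)
      → V ⊕ (G.edgeFinset ⊕ G.edgeFinset)
  | Sum.inl p => Sum.inl p.1.1
  | Sum.inr e => Sum.inr (Sum.inl e)

/-- The supply vector associated with a vertex `v` of `G`: value `-1` at (the copy
of) `v` and at `w_e` for every edge `e` of `G` incident to `v`, and `0` elsewhere. -/
def misSupply (v : V) : V ⊕ (G.edgeFinset ⊕ G.edgeFinset) → ℝ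
  | Sum.inl u => if u = v then -1 else 0
  | Sum.inr (Sum.inl _) => 0
  | Sum.inr (Sum.inr e) => if v ∈ (e.1 : Sym2 V) then -1 else 0

set_option maxHeartbeats 1000000 in
/-- Theorem (reduction from maximum independent set to maxf-LoMuF): for any index
set `I` of vertices of `G`, there exist targets in `G'` and a valid multi-commodity
flow (all capacities being `1`) satisfying the demand vectors `d_i ∘ u_i` for
`i ∈ I` iff `I` is an independent set of `G`. -/
theorem mis_reduction (I : Finset V) :
    (∃ (u : {v // v ∈ I} → V ⊕ (G.edgeFinset ⊕ G.edgeFinset))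
        (f : {v // v ∈ I}
          → ({p : V × G.edgeFinset // p.1 ∈ (p.2.1 : Sym2 V)} ⊕ G.edgeFinset) → ℝ),
        (∀ e, ∑ i, |f i e| ≤ 1) ∧
        ∀ i, satisfiesFlow (misHd G) (misTl G) (f i)
          (assign (misSupply G i.1) (u i)))
      ↔ ∀ i ∈ I, ∀ j ∈ I, ¬ G.Adj i j := by
  constructor
  · rintro ⟨u, f, hcap, hflow⟩ i hi j hj hadj
    have hij : i ≠ j := hadj.ne
    set e : {x // x ∈ G.edgeFinset} :=
      ⟨s(i, j), by simpa [SimpleGraph.mem_edgeFinset] using hadj⟩ with he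
    have key : ∀ k : {v // v ∈ I}, k.1 ∈ (e.1 : Sym2 V) →
        (1 : ℝ) ≤ |f k (Sum.inr e)| := by
      intro k hk
      have hfl := hflow k (Sum.inr (Sum.inr e))
      have hrhs : (∑ e' : _, if misHd G e' = Sum.inr (Sum.inr e) then f k e' else 0)
          - (∑ e' : _, if misTl G e' = Sum.inr (Sum.inr e) then f k e' else 0)
          = f k (Sum.inr e) := by
        simp [Fintype.sum_sum_type, misHd, misTl]
      rw [hrhs] at hfl
      by_cases hu : u k = Sum.inr (Sum.inr e)
      · have hassign : assign (misSupply G k.1) (u k) (Sum.inr (Sum.inr e))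
            = -(∑ w ∈ univ.erase (u k), misSupply G k.1 w) := by
          rw [assign, if_pos hu.symm]
        have hmem : (Sum.inl k.1 : V ⊕ ({x // x ∈ G.edgeFinset} ⊕ {x // x ∈ G.edgeFinset}))
            ∈ univ.erase (u k) := by
          rw [hu]; simp
        have hnonpos : ∀ w ∈ (univ.erase (u k)).erase (Sum.inl k.1),
            misSupply G k.1 w ≤ 0 := by
          rintro (w | w | w) _ <;> simp [misSupply] <;> split_ifs <;> norm_num
        have hsum : ∑ w ∈ univ.erase (u k), misSupply G k.1 w ≤ -1 := by
          rw [← Finset.sum_erase_add _ _ hmem]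
          have h1 : misSupply G k.1 (Sum.inl k.1) = -1 := by simp [misSupply]
          have h2 : ∑ w ∈ (univ.erase (u k)).erase (Sum.inl k.1),
              misSupply G k.1 w ≤ 0 := Finset.sum_nonpos hnonpos
          rw [h1]; linarith
        have : (1 : ℝ) ≤ f k (Sum.inr e) := by
          rw [← hfl, hassign]; linarith
        calc (1:ℝ) ≤ f k (Sum.inr e) := this
          _ ≤ |f k (Sum.inr e)| := le_abs_self _
      · have hassign : assign (misSupply G k.1) (u k) (Sum.inr (Sum.inr e))
            = misSupply G k.1 (Sum.inr (Sum.inr e)) := by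
          rw [assign, if_neg (fun h => hu h.symm)]
        rw [hassign] at hfl
        have : misSupply G k.1 (Sum.inr (Sum.inr e)) = -1 := by
          simp [misSupply, hk]
        rw [this] at hfl
        rw [← hfl]; norm_num
    have hki : (i : V) ∈ (e.1 : Sym2 V) := by simp [he]
    have hkj : (j : V) ∈ (e.1 : Sym2 V) := by simp [he]
    have h1 := key ⟨i, hi⟩ hki
    have h2 := key ⟨j, hj⟩ hkj
    have hne : (⟨i, hi⟩ : {v // v ∈ I}) ≠ ⟨j, hj⟩ := by
      simp [Subtype.ext_iff, hij]
    have hsub : ({⟨i, hi⟩, ⟨j, hj⟩} : Finset {v // v ∈ I}) ⊆ univ :=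
      Finset.subset_univ _
    have hpair : ∑ k ∈ ({⟨i, hi⟩, ⟨j, hj⟩} : Finset {v // v ∈ I}),
        |f k (Sum.inr e)| ≤ ∑ k : {v // v ∈ I}, |f k (Sum.inr e)| :=
      Finset.sum_le_sum_of_subset_of_nonneg hsub (fun _ _ _ => abs_nonneg _)
    rw [Finset.sum_pair hne] at hpair
    have := hcap (Sum.inr e)
    linarith
  · intro hI
    refine ⟨fun k => Sum.inl k.1,
      fun k => Sum.elim (fun p => if p.1.1 = k.1 then -1 else 0)
        (fun e => if k.1 ∈ (e.1 : Sym2 V) then -1 else 0), ?_, ?_⟩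
    · rintro (p | e)
      · have : ∀ k : {v // v ∈ I},
            |Sum.elim (fun p : {p : V × {x // x ∈ G.edgeFinset} // p.1 ∈ (p.2.1 : Sym2 V)} =>
                if p.1.1 = k.1 then (-1:ℝ) else 0)
              (fun e : {x // x ∈ G.edgeFinset} => if k.1 ∈ (e.1 : Sym2 V) then -1 else 0)
              (Sum.inl p)|
            = if p.1.1 = k.1 then 1 else 0 := by
          intro k; simp only [Sum.elim_inl]; split_ifs <;> norm_num
        rw [Finset.sum_congr rfl (fun k _ => this k)]
        rw [Finset.sum_coe_sort I (fun v => if p.1.1 = v then (1:ℝ) else 0)]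
        rw [Finset.sum_ite_eq I p.1.1 (fun _ => (1:ℝ))]
        split_ifs <;> norm_num
      · have : ∀ k : {v // v ∈ I},
            |Sum.elim (fun p : {p : V × {x // x ∈ G.edgeFinset} // p.1 ∈ (p.2.1 : Sym2 V)} =>
                if p.1.1 = k.1 then (-1:ℝ) else 0)
              (fun e' : {x // x ∈ G.edgeFinset} => if k.1 ∈ (e'.1 : Sym2 V) then -1 else 0)
              (Sum.inr e)|
            = if k.1 ∈ (e.1 : Sym2 V) then 1 else 0 := by
          intro k; simp only [Sum.elim_inr]; split_ifs <;> norm_num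
        rw [Finset.sum_congr rfl (fun k _ => this k)]
        rw [Finset.sum_coe_sort I (fun v => if v ∈ (e.1 : Sym2 V) then (1:ℝ) else 0)]
        have hcard : (I.filter (fun v => v ∈ (e.1 : Sym2 V))).card ≤ 1 := by
          rw [Finset.card_le_one]
          intro a ha b hb
          simp only [Finset.mem_filter] at ha hb
          obtain ⟨⟨x, y⟩, hxy⟩ := e
          have hadj : G.Adj x y := by
            simpa [SimpleGraph.mem_edgeFinset] using hxy
          simp only [Sym2.mem_iff] at ha hb
          rcases ha.2 with rfl | rfl <;> rcases hb.2 with rfl | rfl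
          · rfl
          · exact absurd hadj (hI a ha.1 b hb.1)
          · exact absurd hadj (hI b hb.1 a ha.1)
          · rfl
        calc (∑ v ∈ I, if v ∈ (e.1 : Sym2 V) then (1:ℝ) else 0)
            = (I.filter (fun v => v ∈ (e.1 : Sym2 V))).card := by
              rw [Finset.sum_boole]
          _ ≤ 1 := by exact_mod_cast hcard
    · intro k
      have hsubtype : ∀ (F : V → {x // x ∈ G.edgeFinset} → ℝ),
          (∑ p : {p : V × {x // x ∈ G.edgeFinset} // p.1 ∈ (p.2.1 : Sym2 V)}, F p.1.1 p.1.2)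
          = ∑ q : V × {x // x ∈ G.edgeFinset},
              if q.1 ∈ (q.2.1 : Sym2 V) then F q.1 q.2 else 0 := by
        intro F
        rw [← Finset.sum_filter]
        exact (Finset.sum_subtype
          (univ.filter fun q : V × {x // x ∈ G.edgeFinset} => q.1 ∈ (q.2.1 : Sym2 V))
          (fun x => by simp) (fun q => F q.1 q.2)).symm
      unfold satisfiesFlow
      rintro (v | e' | e')
      · -- vertex of the first kind
        have hin : (∑ ee, if misHd G ee = Sum.inl v
            then Sum.elim (fun p : {p : V × {x // x ∈ G.edgeFinset} // p.1 ∈ (p.2.1 : Sym2 V)} =>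
                if p.1.1 = k.1 then (-1:ℝ) else 0)
              (fun e : {x // x ∈ G.edgeFinset} => if k.1 ∈ (e.1 : Sym2 V) then -1 else 0) ee
            else 0) = 0 := by
          simp [Fintype.sum_sum_type, misHd]
        rw [hin]
        have hout : (∑ ee, if misTl G ee = Sum.inl v
            then Sum.elim (fun p : {p : V × {x // x ∈ G.edgeFinset} // p.1 ∈ (p.2.1 : Sym2 V)} =>
                if p.1.1 = k.1 then (-1:ℝ) else 0)
              (fun e : {x // x ∈ G.edgeFinset} => if k.1 ∈ (e.1 : Sym2 V) then -1 else 0) ee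
            else 0)
            = ∑ p : {p : V × {x // x ∈ G.edgeFinset} // p.1 ∈ (p.2.1 : Sym2 V)},
                (if p.1.1 = v then (if p.1.1 = k.1 then (-1:ℝ) else 0) else 0) := by
          simp [Fintype.sum_sum_type, misTl]
        rw [hout]
        by_cases hv : v = k.1
        · rw [hv]
          have hL : assign (misSupply G k.1) (Sum.inl k.1) (Sum.inl k.1)
              = -(∑ w ∈ univ.erase (Sum.inl k.1 :
                  V ⊕ ({x // x ∈ G.edgeFinset} ⊕ {x // x ∈ G.edgeFinset})),
                  misSupply G k.1 w) := by
            rw [assign, if_pos rfl]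
          rw [hL]
          have hA : (∑ w ∈ univ.erase (Sum.inl k.1 :
                  V ⊕ ({x // x ∈ G.edgeFinset} ⊕ {x // x ∈ G.edgeFinset})),
                  misSupply G k.1 w)
              = ∑ e : {x // x ∈ G.edgeFinset}, if k.1 ∈ (e.1 : Sym2 V) then (-1:ℝ) else 0 := by
            rw [Finset.sum_erase_eq_sub (Finset.mem_univ _)]
            have : (∑ w : V ⊕ ({x // x ∈ G.edgeFinset} ⊕ {x // x ∈ G.edgeFinset}),
                misSupply G k.1 w)
                = -1 + (∑ e : {x // x ∈ G.edgeFinset},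
                    if k.1 ∈ (e.1 : Sym2 V) then (-1:ℝ) else 0) := by
              simp [Fintype.sum_sum_type, misSupply]
            rw [this]
            simp [misSupply]
          have hB : (∑ p : {p : V × {x // x ∈ G.edgeFinset} // p.1 ∈ (p.2.1 : Sym2 V)},
                (if p.1.1 = k.1 then (if p.1.1 = k.1 then (-1:ℝ) else 0) else 0))
              = ∑ e : {x // x ∈ G.edgeFinset}, if k.1 ∈ (e.1 : Sym2 V) then (-1:ℝ) else 0 := by
            rw [hsubtype (fun a _ => if a = k.1 then (if a = k.1 then (-1:ℝ) else 0) else 0)]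
            rw [Fintype.sum_prod_type]
            have : ∀ a : V, (∑ e : {x // x ∈ G.edgeFinset},
                if a ∈ (e.1 : Sym2 V) then (if a = k.1 then (if a = k.1 then (-1:ℝ) else 0) else 0) else 0)
                = if a = k.1 then (∑ e : {x // x ∈ G.edgeFinset},
                    if k.1 ∈ (e.1 : Sym2 V) then (-1:ℝ) else 0) else 0 := by
              intro a
              by_cases ha : a = k.1
              · subst ha; simp
              · simp [ha]
            rw [Finset.sum_congr rfl (fun a _ => this a)]
            rw [Finset.sum_ite_eq' univ k.1]
            simp
          rw [hA, hB]
          ring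
        · have hL : assign (misSupply G k.1) (Sum.inl k.1) (Sum.inl v) = 0 := by
            rw [assign, if_neg (by simp [hv])]
            simp [misSupply, hv]
          rw [hL]
          have hz : (∑ p : {p : V × {x // x ∈ G.edgeFinset} // p.1 ∈ (p.2.1 : Sym2 V)},
                (if p.1.1 = v then (if p.1.1 = k.1 then (-1:ℝ) else 0) else 0)) = 0 := by
            apply Finset.sum_eq_zero
            intro p _
            split_ifs with h1 h2
            · exact absurd (h1 ▸ h2) hv
            · rfl
            · rfl
          rw [hz]; ring
      · -- vertex of the second kind (middle)
        have hL : assign (misSupply G k.1) (Sum.inl k.1) (Sum.inr (Sum.inl e')) = 0 := by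
          rw [assign, if_neg (by simp)]
          simp [misSupply]
        rw [hL]
        have hin : (∑ ee, if misHd G ee = Sum.inr (Sum.inl e')
            then Sum.elim (fun p : {p : V × {x // x ∈ G.edgeFinset} // p.1 ∈ (p.2.1 : Sym2 V)} =>
                if p.1.1 = k.1 then (-1:ℝ) else 0)
              (fun e : {x // x ∈ G.edgeFinset} => if k.1 ∈ (e.1 : Sym2 V) then -1 else 0) ee
            else 0)
            = ∑ p : {p : V × {x // x ∈ G.edgeFinset} // p.1 ∈ (p.2.1 : Sym2 V)},
                (if p.1.2 = e' then (if p.1.1 = k.1 then (-1:ℝ) else 0) else 0) := by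
          simp [Fintype.sum_sum_type, misHd]
        rw [hin]
        have hout : (∑ ee, if misTl G ee = Sum.inr (Sum.inl e')
            then Sum.elim (fun p : {p : V × {x // x ∈ G.edgeFinset} // p.1 ∈ (p.2.1 : Sym2 V)} =>
                if p.1.1 = k.1 then (-1:ℝ) else 0)
              (fun e : {x // x ∈ G.edgeFinset} => if k.1 ∈ (e.1 : Sym2 V) then -1 else 0) ee
            else 0)
            = if k.1 ∈ (e'.1 : Sym2 V) then (-1:ℝ) else 0 := by
          simp [Fintype.sum_sum_type, misTl]
        rw [hout]
        have hB : (∑ p : {p : V × {x // x ∈ G.edgeFinset} // p.1 ∈ (p.2.1 : Sym2 V)},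
              (if p.1.2 = e' then (if p.1.1 = k.1 then (-1:ℝ) else 0) else 0))
            = if k.1 ∈ (e'.1 : Sym2 V) then (-1:ℝ) else 0 := by
          rw [hsubtype (fun a b => if b = e' then (if a = k.1 then (-1:ℝ) else 0) else 0)]
          have : ∀ q : V × {x // x ∈ G.edgeFinset},
              (if q.1 ∈ (q.2.1 : Sym2 V)
                then (if q.2 = e' then (if q.1 = k.1 then (-1:ℝ) else 0) else 0) else 0)
              = if q = (k.1, e') then (if k.1 ∈ (e'.1 : Sym2 V) then (-1:ℝ) else 0) else 0 := by
            rintro ⟨a, b⟩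
            by_cases h1 : a = k.1 <;> by_cases h2 : b = e' <;>
              simp [h1, h2, Prod.ext_iff] <;> intro h <;> simp_all
          rw [Finset.sum_congr rfl (fun q _ => this q)]
          rw [Finset.sum_ite_eq' univ (k.1, e')]
          simp
        rw [hB]
        ring
      · -- vertex of the third kind (w_e)
        have hL : assign (misSupply G k.1) (Sum.inl k.1) (Sum.inr (Sum.inr e'))
            = if k.1 ∈ (e'.1 : Sym2 V) then (-1:ℝ) else 0 := by
          rw [assign, if_neg (by simp)]
          simp [misSupply]
        rw [hL]
        have hin : (∑ ee, if misHd G ee = Sum.inr (Sum.inr e')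
            then Sum.elim (fun p : {p : V × {x // x ∈ G.edgeFinset} // p.1 ∈ (p.2.1 : Sym2 V)} =>
                if p.1.1 = k.1 then (-1:ℝ) else 0)
              (fun e : {x // x ∈ G.edgeFinset} => if k.1 ∈ (e.1 : Sym2 V) then -1 else 0) ee
            else 0)
            = if k.1 ∈ (e'.1 : Sym2 V) then (-1:ℝ) else 0 := by
          simp [Fintype.sum_sum_type, misHd]
        rw [hin]
        have hout : (∑ ee, if misTl G ee = Sum.inr (Sum.inr e')
            then Sum.elim (fun p : {p : V × {x // x ∈ G.edgeFinset} // p.1 ∈ (p.2.1 : Sym2 V)} =>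
                if p.1.1 = k.1 then (-1:ℝ) else 0)
              (fun e : {x // x ∈ G.edgeFinset} => if k.1 ∈ (e.1 : Sym2 V) then -1 else 0) ee
            else 0) = 0 := by
          simp [Fintype.sum_sum_type, misTl]
        rw [hout]
        ring

end MIS
end
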